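/- arXiv:1908.04091 — 3 statements merged into one kernel-verified Lean document; each statement's English description precedes it below -/
import Mathlib

section
/- Let σ > ζ > 0 and c > 0 satisfy σ·tanh(σc) + ζ·tanh(ζc) = σ - ζ. Define f_k(x) = h(A_k x) - b_kᵀ A_k x where h(u) = Σᵢ 2·log(2·cosh(uᵢ/2)), A_k is the 4k×k block matrix with blocks 2σW_k, -2ζW_k, -2σW_k, 2ζW_k, and b_k = (𝟙_k, 𝟙_k, -𝟙_k, -𝟙_k). Then x* = c·(1, 2, ..., k)ᵀ satisfies ∇f_k(x*) = 0, hence x* is the unique global minimizer of the strictly convex function f_k. -/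
noncomputable section

/-- The k×k matrix `W_k` with 1's on the main anti-diagonal (1-based entries `i+j = k+1`)
and -1's on the adjacent anti-diagonal (`i+j = k`). -/
def Wmat (k : ℕ) : Matrix (Fin k) (Fin k) ℝ :=
  Matrix.of fun i j =>
    if (i : ℕ) + (j : ℕ) + 2 = k + 1 then 1
    else if (i : ℕ) + (j : ℕ) + 2 = k then -1
    else 0

/-- The 4k×k data matrix with vertical blocks `2σW_k, -2ζW_k, -2σW_k, 2ζW_k`. -/
def Amat (σ ζ : ℝ) (k : ℕ) : Matrix (Fin (4 * k)) (Fin k) ℝ :=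
  Matrix.of fun i j =>
    if h1 : (i : ℕ) < k then 2 * σ * Wmat k ⟨i, h1⟩ j
    else if h2 : (i : ℕ) < 2 * k then -2 * ζ * Wmat k ⟨(i : ℕ) - k, by omega⟩ j
    else if h3 : (i : ℕ) < 3 * k then -2 * σ * Wmat k ⟨(i : ℕ) - 2 * k, by omega⟩ j
    else 2 * ζ * Wmat k ⟨(i : ℕ) - 3 * k, by have := i.isLt; omega⟩ j

/-- The response vector `b_k = (𝟙_k, 𝟙_k, -𝟙_k, -𝟙_k)`. -/
def bvec (k : ℕ) : Fin (4 * k) → ℝ := fun i => if (i : ℕ) < 2 * k then 1 else -1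

/-- The binary logistic regression loss `f_k(x) = h(A_k x) - b_kᵀ A_k x` with
`h(u) = Σᵢ 2 log(2 cosh(uᵢ/2))`. -/
def fk (σ ζ : ℝ) (k : ℕ) (x : Fin k → ℝ) : ℝ :=
  (∑ i, 2 * Real.log (2 * Real.cosh ((Amat σ ζ k).mulVec x i / 2)))
    - ∑ i, bvec k i * (Amat σ ζ k).mulVec x i

/-- `x* = c·(1, 2, …, k)ᵀ`. -/
def xstar (c : ℝ) (k : ℕ) : Fin k → ℝ := fun i => c * ((i : ℕ) + 1)

/-- `K_{t,k} = span{e_{k-t+1}, …, e_k}` (1-based indexing). -/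
def Kspan (k t : ℕ) : Submodule ℝ (Fin k → ℝ) :=
  Submodule.span ℝ ((fun i : Fin k => Pi.single i (1 : ℝ)) '' {i : Fin k | k - t ≤ (i : ℕ)})

end

noncomputable section XstarAux
open Real Finset

private lemma hasDerivAt_g (u : ℝ) :
    HasDerivAt (fun t : ℝ => 2 * Real.log (2 * Real.cosh (t / 2))) (Real.tanh (u / 2)) u := by
  have h1 : HasDerivAt (fun t : ℝ => t / 2) (1/2) u := (hasDerivAt_id u).div_const 2
  have h2 := h1.cosh
  have h3 := h2.const_mul (2:ℝ)
  have hne : (2 : ℝ) * Real.cosh (u/2) ≠ 0 := by positivity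
  have h4 := (h3.log hne).const_mul (2:ℝ)
  refine h4.congr_deriv ?_
  rw [Real.tanh_eq_sinh_div_cosh]
  have hc : Real.cosh (u/2) ≠ 0 := (Real.cosh_pos _).ne'
  field_simp

private lemma hdth (u : ℝ) :
    HasDerivAt (fun t : ℝ => Real.tanh (t/2)) (1/(2 * Real.cosh (u/2)^2)) u := by
  have h1 : HasDerivAt (fun t : ℝ => t / 2) (1/2) u := (hasDerivAt_id u).div_const 2
  have hs := h1.sinh
  have hcd := h1.cosh
  have hc : Real.cosh (u/2) ≠ 0 := (Real.cosh_pos _).ne'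
  have h := hs.fun_div hcd hc
  have heq : (fun t : ℝ => Real.sinh (t/2) / Real.cosh (t/2)) = fun t => Real.tanh (t/2) := by
    funext t; rw [Real.tanh_eq_sinh_div_cosh]
  rw [heq] at h
  refine h.congr_deriv ?_
  have id1 : Real.cosh (u/2)^2 - Real.sinh (u/2)^2 = 1 := Real.cosh_sq_sub_sinh_sq _
  field_simp
  nlinarith [id1]

private lemma tmono : StrictMono (fun t : ℝ => Real.tanh (t/2)) := by
  apply strictMono_of_deriv_pos
  intro x
  rw [(hdth x).deriv]
  positivity

private lemma g_tangent_lt {w v : ℝ} (h : w ≠ v) :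
    2*Real.log (2*Real.cosh (w/2)) + Real.tanh (w/2) * (v - w) < 2*Real.log (2*Real.cosh (v/2)) := by
  set g := fun t : ℝ => 2*Real.log (2*Real.cosh (t/2)) with hg
  have hcont : ∀ a b : ℝ, ContinuousOn g (Set.Icc a b) :=
    fun a b => fun t _ => (hasDerivAt_g t).continuousAt.continuousWithinAt
  show g w + Real.tanh (w/2) * (v - w) < g v
  rcases lt_or_gt_of_ne h with hlt | hgt
  · obtain ⟨ξ, hξ, hslope⟩ := exists_hasDerivAt_eq_slope g (fun t => Real.tanh (t/2)) hlt
      (hcont w v) (fun t _ => hasDerivAt_g t)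
    have h1 : Real.tanh (w/2) < Real.tanh (ξ/2) := tmono hξ.1
    rw [eq_div_iff (by linarith : v - w ≠ 0)] at hslope
    nlinarith [sub_pos.mpr hlt]
  · obtain ⟨ξ, hξ, hslope⟩ := exists_hasDerivAt_eq_slope g (fun t => Real.tanh (t/2)) hgt
      (hcont v w) (fun t _ => hasDerivAt_g t)
    have h1 : Real.tanh (ξ/2) < Real.tanh (w/2) := tmono hξ.2
    rw [eq_div_iff (by linarith : w - v ≠ 0)] at hslope
    nlinarith [sub_pos.mpr hgt]

def el {k : ℕ} (b : Fin 4) (p : Fin k) : Fin (4*k) :=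
  ⟨k * (b:ℕ) + (p:ℕ), by
    have hb : (b:ℕ) ≤ 3 := by omega
    have := p.isLt
    have h2 : k * (b:ℕ) ≤ k * 3 := Nat.mul_le_mul_left k hb
    omega⟩

private lemma el_bijective {k : ℕ} :
    Function.Bijective (fun bp : Fin 4 × Fin k => el bp.1 bp.2) := by
  rw [Fintype.bijective_iff_injective_and_card]
  constructor
  · rintro ⟨b1, p1⟩ ⟨b2, p2⟩ hbp
    have h : k * (b1:ℕ) + (p1:ℕ) = k * (b2:ℕ) + (p2:ℕ) := congrArg Fin.val hbp
    have hp1 := p1.isLt; have hp2 := p2.isLt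
    have hb : b1 = b2 := by
      fin_cases b1 <;> fin_cases b2 <;> first | rfl | (exfalso; simp_all; omega)
    subst hb
    have : p1 = p2 := Fin.ext (by omega)
    simp [this]
  · simp [Fintype.card_prod]

private lemma Wsum {k : ℕ} (p : Fin k) (u : Fin k → ℝ) :
    ∑ j, Wmat k p j * u j
      = u ⟨k-1-(p:ℕ), by have := p.isLt; omega⟩
        - (if (p:ℕ)+1 = k then 0 else u ⟨k-2-(p:ℕ), by have := p.isLt; omega⟩) := by
  have hp := p.isLt
  have hsplit : ∀ j : Fin k, Wmat k p j * u j
      = (if j = (⟨k-1-(p:ℕ), by omega⟩ : Fin k) then u j else 0)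
        + (if (p:ℕ)+1 = k then 0
           else if j = (⟨k-2-(p:ℕ), by omega⟩ : Fin k) then -u j else 0) := by
    intro j
    have hj := j.isLt
    unfold Wmat
    simp only [Matrix.of_apply]
    by_cases hA : (p:ℕ)+(j:ℕ)+2 = k+1
    · rw [if_pos hA]
      have hjj : j = (⟨k-1-(p:ℕ), by omega⟩ : Fin k) := Fin.ext (by simp; omega)
      rw [if_pos hjj]
      by_cases hB : (p:ℕ)+1 = k
      · rw [if_pos hB]; ring
      · rw [if_neg hB, if_neg (by
          intro hcon
          have hv : (j:ℕ) = k-2-(p:ℕ) := by rw [hcon]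
          omega)]
        ring
    · rw [if_neg hA]
      by_cases hB : (p:ℕ)+(j:ℕ)+2 = k
      · rw [if_pos hB]
        rw [if_neg (by
          intro hcon
          have hv : (j:ℕ) = k-1-(p:ℕ) := by rw [hcon]
          omega)]
        rw [if_neg (by omega)]
        rw [if_pos (Fin.ext (by simp; omega) : j = (⟨k-2-(p:ℕ), by omega⟩ : Fin k))]
        ring
      · rw [if_neg hB]
        rw [if_neg (by
          intro hcon
          have hv : (j:ℕ) = k-1-(p:ℕ) := by rw [hcon]
          omega)]
        by_cases hC : (p:ℕ)+1 = k
        · rw [if_pos hC]; ring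
        · rw [if_neg hC, if_neg (by
            intro hcon
            have hv : (j:ℕ) = k-2-(p:ℕ) := by rw [hcon]
            omega)]
          ring
  rw [Finset.sum_congr rfl (fun j _ => hsplit j), Finset.sum_add_distrib]
  rw [Finset.sum_ite_eq' Finset.univ _ u]
  simp only [Finset.mem_univ, if_true]
  by_cases hB : (p:ℕ)+1 = k
  · simp [hB]
  · simp only [if_neg hB]
    rw [Finset.sum_ite_eq' Finset.univ _ (fun j => -u j)]
    simp only [Finset.mem_univ, if_true]
    ring

def coefv (σ ζ : ℝ) : Fin 4 → ℝ := ![2*σ, -2*ζ, -2*σ, 2*ζ]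

private lemma Amat_el (σ ζ : ℝ) {k : ℕ} (b : Fin 4) (p j : Fin k) :
    Amat σ ζ k (el b p) j = coefv σ ζ b * Wmat k p j := by
  have hp := p.isLt
  have hb4 := b.isLt
  rcases (by omega : (b:ℕ) = 0 ∨ (b:ℕ) = 1 ∨ (b:ℕ) = 2 ∨ (b:ℕ) = 3) with h|h|h|h
  · have hb : b = (0:Fin 4) := Fin.ext h
    subst hb
    have hv : ((el (0:Fin 4) p : Fin (4*k)) : ℕ) = k * 0 + (p:ℕ) := rfl
    simp only [Amat, Matrix.of_apply]
    rw [dif_pos (show ((el (0:Fin 4) p : Fin (4*k)) : ℕ) < k by omega)]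
    have hmk : (⟨((el (0:Fin 4) p : Fin (4*k)) : ℕ), by omega⟩ : Fin k) = p := by
      apply Fin.ext
      simp only [Fin.val_mk, hv]
      omega
    rw [hmk]
    norm_num [coefv]
  · have hb : b = (1:Fin 4) := Fin.ext h
    subst hb
    have hv : ((el (1:Fin 4) p : Fin (4*k)) : ℕ) = k * 1 + (p:ℕ) := rfl
    simp only [Amat, Matrix.of_apply]
    rw [dif_neg (show ¬ ((el (1:Fin 4) p : Fin (4*k)) : ℕ) < k by omega),
        dif_pos (show ((el (1:Fin 4) p : Fin (4*k)) : ℕ) < 2 * k by omega)]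
    have hmk : (⟨((el (1:Fin 4) p : Fin (4*k)) : ℕ) - k, by omega⟩ : Fin k) = p := by
      apply Fin.ext
      simp only [Fin.val_mk, hv]
      omega
    rw [hmk]
    norm_num [coefv]
  · have hb : b = (2:Fin 4) := Fin.ext h
    subst hb
    have hv : ((el (2:Fin 4) p : Fin (4*k)) : ℕ) = k * 2 + (p:ℕ) := rfl
    simp only [Amat, Matrix.of_apply]
    rw [dif_neg (show ¬ ((el (2:Fin 4) p : Fin (4*k)) : ℕ) < k by omega),
        dif_neg (show ¬ ((el (2:Fin 4) p : Fin (4*k)) : ℕ) < 2 * k by omega),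
        dif_pos (show ((el (2:Fin 4) p : Fin (4*k)) : ℕ) < 3 * k by omega)]
    have hmk : (⟨((el (2:Fin 4) p : Fin (4*k)) : ℕ) - 2 * k, by omega⟩ : Fin k) = p := by
      apply Fin.ext
      simp only [Fin.val_mk, hv]
      omega
    rw [hmk]
    norm_num [show coefv σ ζ 2 = -2*σ from rfl]
  · have hb : b = (3:Fin 4) := Fin.ext h
    subst hb
    have hv : ((el (3:Fin 4) p : Fin (4*k)) : ℕ) = k * 3 + (p:ℕ) := rfl
    simp only [Amat, Matrix.of_apply]
    rw [dif_neg (show ¬ ((el (3:Fin 4) p : Fin (4*k)) : ℕ) < k by omega),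
        dif_neg (show ¬ ((el (3:Fin 4) p : Fin (4*k)) : ℕ) < 2 * k by omega),
        dif_neg (show ¬ ((el (3:Fin 4) p : Fin (4*k)) : ℕ) < 3 * k by omega)]
    have hmk : (⟨((el (3:Fin 4) p : Fin (4*k)) : ℕ) - 3 * k, by omega⟩ : Fin k) = p := by
      apply Fin.ext
      simp only [Fin.val_mk, hv]
      omega
    rw [hmk]
    norm_num [show coefv σ ζ 3 = 2*ζ from rfl]

private lemma bvec_el {k : ℕ} (b : Fin 4) (p : Fin k) :
    bvec k (el b p) = if (b:ℕ) < 2 then 1 else -1 := by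
  have hp := p.isLt
  have hb4 := b.isLt
  rcases (by omega : (b:ℕ) = 0 ∨ (b:ℕ) = 1 ∨ (b:ℕ) = 2 ∨ (b:ℕ) = 3) with h|h|h|h
  · have hb : b = (0:Fin 4) := Fin.ext h
    subst hb
    have hv : ((el (0:Fin 4) p : Fin (4*k)) : ℕ) = k * 0 + (p:ℕ) := rfl
    rw [bvec, if_pos (by omega), if_pos (by decide)]
  · have hb : b = (1:Fin 4) := Fin.ext h
    subst hb
    have hv : ((el (1:Fin 4) p : Fin (4*k)) : ℕ) = k * 1 + (p:ℕ) := rfl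
    rw [bvec, if_pos (by omega), if_pos (by decide)]
  · have hb : b = (2:Fin 4) := Fin.ext h
    subst hb
    have hv : ((el (2:Fin 4) p : Fin (4*k)) : ℕ) = k * 2 + (p:ℕ) := rfl
    rw [bvec, if_neg (by omega), if_neg (by decide)]
  · have hb : b = (3:Fin 4) := Fin.ext h
    subst hb
    have hv : ((el (3:Fin 4) p : Fin (4*k)) : ℕ) = k * 3 + (p:ℕ) := rfl
    rw [bvec, if_neg (by omega), if_neg (by decide)]

private lemma mulVec_el (σ ζ : ℝ) {k : ℕ} (b : Fin 4) (p : Fin k) (u : Fin k → ℝ) :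
    (Amat σ ζ k).mulVec u (el b p) = coefv σ ζ b * ∑ j, Wmat k p j * u j := by
  simp only [Matrix.mulVec, dotProduct, Amat_el, Finset.mul_sum, mul_assoc]

private lemma Wsum_xstar (c : ℝ) {k : ℕ} (p : Fin k) :
    ∑ j, Wmat k p j * xstar c k j = c := by
  have hp := p.isLt
  rw [Wsum]
  unfold xstar
  by_cases hB : (p:ℕ)+1 = k
  · rw [if_pos hB]
    have h0 : k - 1 - (p:ℕ) = 0 := by omega
    simp [h0]
  · rw [if_neg hB]
    have h1 : k - 1 - (p:ℕ) = (k - 2 - (p:ℕ)) + 1 := by omega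
    simp only [h1]
    push_cast
    ring

private lemma key (σ ζ c : ℝ)
    (heq : σ * Real.tanh (σ*c) + ζ * Real.tanh (ζ*c) = σ - ζ) {k : ℕ} (y : Fin k → ℝ) :
    ∑ i : Fin (4*k), (Real.tanh ((Amat σ ζ k).mulVec (xstar c k) i / 2) - bvec k i)
        * (Amat σ ζ k).mulVec y i = 0 := by
  rw [← Fintype.sum_bijective (fun bp : Fin 4 × Fin k => el bp.1 bp.2) el_bijective _
      (fun i : Fin (4*k) => (Real.tanh ((Amat σ ζ k).mulVec (xstar c k) i / 2) - bvec k i)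
        * (Amat σ ζ k).mulVec y i) (fun bp => rfl)]
  rw [Fintype.sum_prod_type, Fin.sum_univ_four]
  simp only [mulVec_el, bvec_el, Wsum_xstar]
  norm_num [coefv, show ((3:Fin 4):ℕ) = 3 from rfl, show (![2*σ, -(2*ζ), -(2*σ), 2*ζ] : Fin 4 → ℝ) 2 = -(2*σ) from rfl, show (![2*σ, -(2*ζ), -(2*σ), 2*ζ] : Fin 4 → ℝ) 3 = 2*ζ from rfl]
  rw [show 2*σ*c/2 = σ*c by ring, show -(2*ζ*c)/2 = -(ζ*c) by ring,
      show -(2*σ*c)/2 = -(σ*c) by ring, show 2*ζ*c/2 = ζ*c by ring,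
      Real.tanh_neg, Real.tanh_neg]
  rw [← Finset.sum_neg_distrib, ← Finset.sum_neg_distrib,
      ← Finset.sum_add_distrib, ← Finset.sum_add_distrib, ← Finset.sum_add_distrib]
  apply Finset.sum_eq_zero
  intro p _
  linear_combination (4 * ∑ j, Wmat k p j * y j) * heq

private lemma W_inj {k : ℕ} {d : Fin k → ℝ} (hrow : ∀ p : Fin k, ∑ j, Wmat k p j * d j = 0) :
    d = 0 := by
  have main : ∀ m (hm : m < k), d ⟨m, hm⟩ = 0 := by
    intro m
    induction m with
    | zero =>
      intro hm
      have hp := hrow ⟨k-1, by omega⟩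
      rw [Wsum ⟨k-1, by omega⟩ d] at hp
      have hval : ((⟨k-1, by omega⟩ : Fin k) : ℕ) = k - 1 := rfl
      simp only [hval] at hp
      rw [if_pos (by omega)] at hp
      have e1 : d ⟨k - 1 - (k - 1), by omega⟩ = d ⟨0, hm⟩ := by
        congr 1
        exact Fin.ext (by simp only [Fin.val_mk]; omega)
      rw [e1] at hp
      linarith
    | succ n ih =>
      intro hm
      have hn := ih (by omega)
      have hp := hrow ⟨k-2-n, by omega⟩
      rw [Wsum ⟨k-2-n, by omega⟩ d] at hp
      have hval : ((⟨k-2-n, by omega⟩ : Fin k) : ℕ) = k - 2 - n := rfl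
      simp only [hval] at hp
      rw [if_neg (by omega)] at hp
      have e1 : d ⟨k - 1 - (k - 2 - n), by omega⟩ = d ⟨n+1, hm⟩ := by
        congr 1
        exact Fin.ext (by simp only [Fin.val_mk]; omega)
      have e2 : d ⟨k - 2 - (k - 2 - n), by omega⟩ = d ⟨n, by omega⟩ := by
        congr 1
        exact Fin.ext (by simp only [Fin.val_mk]; omega)
      rw [e1, e2] at hp
      rw [hn] at hp
      linarith
  funext i
  have := main (i:ℕ) i.isLt
  simpa [Fin.eta] using this

end XstarAux

theorem xstar_is_unique_minimizer (σ ζ c : ℝ) (hζ : 0 < ζ) (hζσ : ζ < σ) (hc : 0 < c)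
    (heq : σ * Real.tanh (σ * c) + ζ * Real.tanh (ζ * c) = σ - ζ) (k : ℕ) :
    fderiv ℝ (fk σ ζ k) (xstar c k) = 0 ∧
      ∀ x : Fin k → ℝ, x ≠ xstar c k → fk σ ζ k (xstar c k) < fk σ ζ k x := by
  classical
  set A := Amat σ ζ k with hA
  set xs := xstar c k with hxs
  let Lc : (Fin k → ℝ) →L[ℝ] (Fin (4*k) → ℝ) := LinearMap.toContinuousLinearMap A.mulVecLin
  let ℓ : Fin (4*k) → ((Fin k → ℝ) →L[ℝ] ℝ) :=
    fun i => (ContinuousLinearMap.proj i).comp Lc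
  have hℓ : ∀ i x, ℓ i x = A.mulVec x i := fun i x => rfl
  have hσ : 0 < σ := hζ.trans hζσ
  -- the derivative is zero
  have hD0 : (∑ i : Fin (4*k), (Real.tanh (A.mulVec xs i / 2) - bvec k i) • ℓ i) = 0 := by
    apply ContinuousLinearMap.ext
    intro y
    rw [ContinuousLinearMap.zero_apply]
    simp only [ContinuousLinearMap.sum_apply, ContinuousLinearMap.smul_apply, hℓ,
      smul_eq_mul]
    exact key σ ζ c heq y
  have hfd : HasFDerivAt (fk σ ζ k)
      (∑ i : Fin (4*k), (Real.tanh (A.mulVec xs i / 2) - bvec k i) • ℓ i) xs := by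
    have h1 : HasFDerivAt
        (fun x : Fin k → ℝ => ∑ i : Fin (4*k), 2 * Real.log (2 * Real.cosh (A.mulVec x i / 2)))
        (∑ i : Fin (4*k), Real.tanh (A.mulVec xs i / 2) • ℓ i) xs := by
      apply HasFDerivAt.fun_sum
      intro i _
      have hli : HasFDerivAt (fun x : Fin k → ℝ => A.mulVec x i) (ℓ i) xs :=
        (ℓ i).hasFDerivAt
      exact (hasDerivAt_g (A.mulVec xs i)).comp_hasFDerivAt (h₂ := fun t : ℝ => 2 * Real.log (2 * Real.cosh (t / 2))) xs hli
    have h2 : HasFDerivAt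
        (fun x : Fin k → ℝ => ∑ i : Fin (4*k), bvec k i * A.mulVec x i)
        (∑ i : Fin (4*k), bvec k i • ℓ i) xs := by
      apply HasFDerivAt.fun_sum
      intro i _
      have hli : HasFDerivAt (fun x : Fin k → ℝ => A.mulVec x i) (ℓ i) xs :=
        (ℓ i).hasFDerivAt
      exact hli.const_mul (bvec k i)
    have h3 := h1.sub h2
    have h4 : (∑ i : Fin (4*k), Real.tanh (A.mulVec xs i / 2) • ℓ i)
        - (∑ i : Fin (4*k), bvec k i • ℓ i)
        = ∑ i : Fin (4*k), (Real.tanh (A.mulVec xs i / 2) - bvec k i) • ℓ i := by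
      rw [← Finset.sum_sub_distrib]
      exact Finset.sum_congr rfl (fun i _ => (sub_smul _ _ _).symm)
    rw [h4] at h3
    exact h3
  constructor
  · rw [hfd.fderiv, hD0]
  · intro x hx
    -- some coordinate of A x differs from A xs
    have hdiff : ∃ i : Fin (4*k), A.mulVec x i ≠ A.mulVec xs i := by
      by_contra hcon
      push_neg at hcon
      apply hx
      have hrow : ∀ p : Fin k, ∑ j, Wmat k p j * (x - xs) j = 0 := by
        intro p
        have h1 : A.mulVec (x - xs) (el 0 p) = 0 := by
          rw [Matrix.mulVec_sub]
          simp [hcon (el 0 p)]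
        rw [mulVec_el] at h1
        have hcoef : coefv σ ζ 0 = 2*σ := by norm_num [coefv]
        rw [hcoef] at h1
        have h2σ : (2*σ : ℝ) ≠ 0 := by positivity
        exact (mul_eq_zero.mp h1).resolve_left h2σ
      have := W_inj hrow
      have hxx : x - xs = 0 := this
      have := sub_eq_zero.mp hxx
      exact this
    obtain ⟨i0, hi0⟩ := hdiff
    have hzero : ∑ i : Fin (4*k), (Real.tanh (A.mulVec xs i / 2) - bvec k i)
        * (A.mulVec x i - A.mulVec xs i) = 0 := by
      have hk := key σ ζ c heq (x - xs)
      rw [show (Amat σ ζ k).mulVec (x - xs) = A.mulVec x - A.mulVec xs by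
        rw [← hA, Matrix.mulVec_sub]] at hk
      simpa using hk
    have hfe : ∀ z : Fin k → ℝ, fk σ ζ k z
        = ∑ i : Fin (4*k), (2 * Real.log (2 * Real.cosh (A.mulVec z i / 2))
            - bvec k i * A.mulVec z i) := by
      intro z
      rw [fk, Finset.sum_sub_distrib]
    rw [hfe, hfe]
    have hle : ∀ i ∈ Finset.univ (α := Fin (4*k)),
        (2 * Real.log (2 * Real.cosh (A.mulVec xs i / 2)) - bvec k i * A.mulVec xs i)
          + (Real.tanh (A.mulVec xs i / 2) - bvec k i) * (A.mulVec x i - A.mulVec xs i)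
        ≤ 2 * Real.log (2 * Real.cosh (A.mulVec x i / 2)) - bvec k i * A.mulVec x i := by
      intro i _
      rcases eq_or_ne (A.mulVec xs i) (A.mulVec x i) with h | h
      · exact le_of_eq (by rw [h]; ring)
      · nlinarith [g_tangent_lt h]
    have hstrict :
        (2 * Real.log (2 * Real.cosh (A.mulVec xs i0 / 2)) - bvec k i0 * A.mulVec xs i0)
          + (Real.tanh (A.mulVec xs i0 / 2) - bvec k i0) * (A.mulVec x i0 - A.mulVec xs i0)
        < 2 * Real.log (2 * Real.cosh (A.mulVec x i0 / 2)) - bvec k i0 * A.mulVec x i0 := by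
      nlinarith [g_tangent_lt (Ne.symm hi0)]
    calc ∑ i : Fin (4*k), (2 * Real.log (2 * Real.cosh (A.mulVec xs i / 2))
            - bvec k i * A.mulVec xs i)
        = ∑ i : Fin (4*k), ((2 * Real.log (2 * Real.cosh (A.mulVec xs i / 2))
            - bvec k i * A.mulVec xs i)
          + (Real.tanh (A.mulVec xs i / 2) - bvec k i) * (A.mulVec x i - A.mulVec xs i)) := by
          rw [Finset.sum_add_distrib, hzero, add_zero]
      _ < ∑ i : Fin (4*k), (2 * Real.log (2 * Real.cosh (A.mulVec x i / 2))
            - bvec k i * A.mulVec x i) :=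
          Finset.sum_lt_sum hle ⟨i0, Finset.mem_univ i0, hstrict⟩
end

section
/- Under the setup of the worst-case dataset (σ > ζ > 0, c > 0 with σ·tanh(σc) + ζ·tanh(ζc) = σ - ζ, A_k, b_k, f_k as defined), the optimal value satisfies f_k* = f_k(x*) = 8k·log 2 + 4k·[log(cosh(σc)) + log(cosh(ζc)) - (σ - ζ)·c], where x* = c·(1,...,k)ᵀ. -/
noncomputable section Aux

open Real Finset

lemma tanh_bounds (x : ℝ) : -1 < Real.tanh x ∧ Real.tanh x < 1 := by
  have h1 : 0 < Real.cosh x := Real.cosh_pos x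
  have h2 : Real.cosh x + Real.sinh x = Real.exp x := Real.cosh_add_sinh x
  have h3 : Real.cosh x - Real.sinh x = Real.exp (-x) := Real.cosh_sub_sinh x
  have e1 := Real.exp_pos x
  have e2 := Real.exp_pos (-x)
  rw [Real.tanh_eq_sinh_div_cosh]
  constructor
  · rw [lt_div_iff₀ h1]; nlinarith
  · rw [div_lt_iff₀ h1]; nlinarith

lemma exp_le_cosh_tanh (x d : ℝ) :
    Real.exp (Real.tanh x * d) ≤ Real.cosh d + Real.tanh x * Real.sinh d := by
  obtain ⟨ht1, ht2⟩ := tanh_bounds x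
  set t := Real.tanh x with htdef
  have hw1 : (0:ℝ) ≤ (1 + t) / 2 := by linarith
  have hw2 : (0:ℝ) ≤ (1 - t) / 2 := by linarith
  have h := Real.geom_mean_le_arith_mean2_weighted hw1 hw2
    (Real.exp_pos d).le (Real.exp_pos (-d)).le (by ring)
  rw [← Real.exp_mul, ← Real.exp_mul, ← Real.exp_add] at h
  have h3 : d * ((1 + t) / 2) + -d * ((1 - t) / 2) = t * d := by ring
  rw [h3] at h
  have hc : Real.cosh d = (Real.exp d + Real.exp (-d)) / 2 := Real.cosh_eq d
  have hs : Real.sinh d = (Real.exp d - Real.exp (-d)) / 2 := Real.sinh_eq d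
  have he : (1 + t) / 2 * Real.exp d + (1 - t) / 2 * Real.exp (-d)
      = Real.cosh d + t * Real.sinh d := by rw [hc, hs]; ring
  linarith [h, he.le]

lemma logcosh_le (x y : ℝ) :
    Real.log (Real.cosh x) + Real.tanh x * (y - x) ≤ Real.log (Real.cosh y) := by
  have hcx := Real.cosh_pos x
  have key : Real.cosh x * Real.exp (Real.tanh x * (y - x)) ≤ Real.cosh y := by
    have h := exp_le_cosh_tanh x (y - x)
    have hy : Real.cosh y
        = Real.cosh x * (Real.cosh (y - x) + Real.tanh x * Real.sinh (y - x)) := by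
      have hxy : x + (y - x) = y := by ring
      rw [Real.tanh_eq_sinh_div_cosh, ← hxy, Real.cosh_add]
      field_simp
      ring
    rw [hy]
    exact mul_le_mul_of_nonneg_left h hcx.le
  have hpos : 0 < Real.cosh x * Real.exp (Real.tanh x * (y - x)) :=
    mul_pos hcx (Real.exp_pos _)
  have h2 := Real.log_le_log hpos key
  rw [Real.log_mul hcx.ne' (Real.exp_ne_zero _), Real.log_exp] at h2
  exact h2

lemma phi_step (u v b : ℝ) :
    2 * Real.log (2 * Real.cosh (u / 2)) - b * u
        + (Real.tanh (u / 2) - b) * (v - u)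
      ≤ 2 * Real.log (2 * Real.cosh (v / 2)) - b * v := by
  have h := logcosh_le (u / 2) (v / 2)
  have l1 : Real.log (2 * Real.cosh (u / 2))
      = Real.log 2 + Real.log (Real.cosh (u / 2)) :=
    Real.log_mul two_ne_zero (Real.cosh_pos _).ne'
  have l2 : Real.log (2 * Real.cosh (v / 2))
      = Real.log 2 + Real.log (Real.cosh (v / 2)) :=
    Real.log_mul two_ne_zero (Real.cosh_pos _).ne'
  rw [l1, l2]
  nlinarith [h]

lemma Wmat_mulVec_xstar (c : ℝ) {k : ℕ} (i : Fin k) :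
    (Wmat k).mulVec (xstar c k) i = c := by
  have hik := i.isLt
  unfold Matrix.mulVec dotProduct Wmat xstar
  simp only [Matrix.of_apply]
  have hsplit : ∀ j : Fin k,
      (if (i : ℕ) + (j : ℕ) + 2 = k + 1 then (1:ℝ)
        else if (i : ℕ) + (j : ℕ) + 2 = k then -1 else 0) * (c * ((j : ℕ) + 1))
      = (if j = (⟨k - 1 - (i : ℕ), by omega⟩ : Fin k) then c * ((j : ℕ) + 1) else 0)
        + (if (i : ℕ) + 2 ≤ k ∧ j = (⟨k - 2 - (i : ℕ), by omega⟩ : Fin k)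
            then -(c * ((j : ℕ) + 1)) else 0) := by
    intro j
    have hjk := j.isLt
    split_ifs with h1 h2 h3 h2' h3' h2'' h3'' <;>
      first
        | ring1
        | (exfalso; simp only [Fin.ext_iff, not_and, not_le, not_lt] at *; omega)
  rw [Finset.sum_congr rfl fun j _ => hsplit j, Finset.sum_add_distrib]
  rw [Finset.sum_ite_eq' Finset.univ]
  by_cases hP : (i : ℕ) + 2 ≤ k
  · have : ∀ j : Fin k,
        (if (i : ℕ) + 2 ≤ k ∧ j = (⟨k - 2 - (i : ℕ), by omega⟩ : Fin k)
          then -(c * ((j : ℕ) + 1)) else 0)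
        = (if j = (⟨k - 2 - (i : ℕ), by omega⟩ : Fin k)
            then -(c * ((j : ℕ) + 1)) else 0) := by
      intro j; simp [hP]
    rw [Finset.sum_congr rfl fun j _ => this j, Finset.sum_ite_eq' Finset.univ]
    simp only [Finset.mem_univ, if_true]
    have e2 : k - 1 - (i : ℕ) = (k - 2 - (i : ℕ)) + 1 := by omega
    rw [e2]
    push_cast
    ring
  · have : ∀ j : Fin k,
        (if (i : ℕ) + 2 ≤ k ∧ j = (⟨k - 2 - (i : ℕ), by omega⟩ : Fin k)
          then -(c * ((j : ℕ) + 1)) else 0) = 0 := by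
      intro j; simp [hP]
    rw [Finset.sum_congr rfl fun j _ => this j, Finset.sum_const, smul_zero]
    simp only [Finset.mem_univ, if_true, add_zero]
    have e1 : (k - 1 - (i : ℕ) : ℕ) = 0 := by omega
    rw [e1]
    norm_num

lemma Amat_mulVec (σ ζ : ℝ) {k : ℕ} (z : Fin k → ℝ) (i : Fin (4 * k)) :
    (Amat σ ζ k).mulVec z i =
      if h1 : (i : ℕ) < k then 2 * σ * (Wmat k).mulVec z ⟨i, h1⟩
      else if h2 : (i : ℕ) < 2 * k then -2 * ζ * (Wmat k).mulVec z ⟨(i : ℕ) - k, by omega⟩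
      else if h3 : (i : ℕ) < 3 * k then
        -2 * σ * (Wmat k).mulVec z ⟨(i : ℕ) - 2 * k, by omega⟩
      else 2 * ζ * (Wmat k).mulVec z ⟨(i : ℕ) - 3 * k, by have := i.isLt; omega⟩ := by
  unfold Amat Matrix.mulVec dotProduct
  simp only [Matrix.of_apply]
  split_ifs with h1 h2 h3 <;>
    simp [*, Finset.mul_sum, mul_assoc]

lemma sum_blocks {k : ℕ} (F : ℕ → ℝ) :
    ∑ i : Fin (4 * k), F (i : ℕ)
      = (∑ t ∈ Finset.range k, F t) + (∑ t ∈ Finset.range k, F (k + t))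
        + (∑ t ∈ Finset.range k, F (2 * k + t)) + (∑ t ∈ Finset.range k, F (3 * k + t)) := by
  rw [Fin.sum_univ_eq_sum_range]
  rw [← Nat.Ico_zero_eq_range]
  rw [← Finset.sum_Ico_consecutive F (by omega : 0 ≤ 3 * k) (by omega : 3 * k ≤ 4 * k)]
  rw [← Finset.sum_Ico_consecutive F (by omega : 0 ≤ 2 * k) (by omega : 2 * k ≤ 3 * k)]
  rw [← Finset.sum_Ico_consecutive F (by omega : 0 ≤ k) (by omega : k ≤ 2 * k)]
  rw [Finset.sum_Ico_eq_sum_range, Finset.sum_Ico_eq_sum_range,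
    Finset.sum_Ico_eq_sum_range, Finset.sum_Ico_eq_sum_range]
  have e1 : 2 * k - k = k := by omega
  have e2 : 3 * k - 2 * k = k := by omega
  have e3 : 4 * k - 3 * k = k := by omega
  simp [e1, e2, e3, Nat.Ico_zero_eq_range]

end Aux

theorem optimal_value_fk (σ ζ c : ℝ) (hζ : 0 < ζ) (hζσ : ζ < σ) (hc : 0 < c)
    (heq : σ * Real.tanh (σ * c) + ζ * Real.tanh (ζ * c) = σ - ζ) (k : ℕ) :
    IsLeast (Set.range (fk σ ζ k)) (fk σ ζ k (xstar c k)) ∧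
      fk σ ζ k (xstar c k)
        = 8 * k * Real.log 2
          + 4 * k * (Real.log (Real.cosh (σ * c)) + Real.log (Real.cosh (ζ * c))
              - (σ - ζ) * c) := by
  set t1 := Real.tanh (σ * c) with ht1
  set t2 := Real.tanh (ζ * c) with ht2
  -- values of u = A x*
  have hu : ∀ i : Fin (4 * k), (Amat σ ζ k).mulVec (xstar c k) i =
      (if (i : ℕ) < k then 2 * σ * c else if (i : ℕ) < 2 * k then -(2 * ζ * c)
        else if (i : ℕ) < 3 * k then -(2 * σ * c) else 2 * ζ * c) := by
    intro i
    rw [Amat_mulVec]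
    split_ifs with h1 h2 h3 <;> rw [Wmat_mulVec_xstar] <;> ring
  -- tanh(u/2) - b values
  have hg0 : ∀ i : Fin (4 * k),
      Real.tanh ((Amat σ ζ k).mulVec (xstar c k) i / 2) - bvec k i
        = (if (i : ℕ) < k then t1 - 1 else if (i : ℕ) < 2 * k then -t2 - 1
            else if (i : ℕ) < 3 * k then 1 - t1 else t2 + 1) := by
    intro i
    rw [hu i]
    unfold bvec
    have a1 : 2 * σ * c / 2 = σ * c := by ring
    have a2 : -(2 * ζ * c) / 2 = -(ζ * c) := by ring
    have a3 : -(2 * σ * c) / 2 = -(σ * c) := by ring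
    have a4 : 2 * ζ * c / 2 = ζ * c := by ring
    split_ifs with h1 h2 h3 <;>
      first
        | omega
        | (rw [a1, ← ht1]; try ring1
           done)
        | (rw [a2, Real.tanh_neg, ← ht2]; try ring1
           done)
        | (rw [a3, Real.tanh_neg, ← ht1]; try ring1
           done)
        | (rw [a4, ← ht2]; try ring1
           done)
  -- gradient condition: ∑ i g_i (A z)_i = 0
  have hg : ∀ z : Fin k → ℝ,
      ∑ i : Fin (4 * k),
        (Real.tanh ((Amat σ ζ k).mulVec (xstar c k) i / 2) - bvec k i)
          * (Amat σ ζ k).mulVec z i = 0 := by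
    intro z
    set Wz : ℕ → ℝ := fun m => if h : m < k then (Wmat k).mulVec z ⟨m, h⟩ else 0 with hWz
    set F : ℕ → ℝ := fun n =>
      if n < k then (t1 - 1) * (2 * σ * Wz n)
      else if n < 2 * k then (-t2 - 1) * (-2 * ζ * Wz (n - k))
      else if n < 3 * k then (1 - t1) * (-2 * σ * Wz (n - 2 * k))
      else (t2 + 1) * (2 * ζ * Wz (n - 3 * k)) with hF
    have hFi : ∀ i : Fin (4 * k),
        (Real.tanh ((Amat σ ζ k).mulVec (xstar c k) i / 2) - bvec k i)
          * (Amat σ ζ k).mulVec z i = F (i : ℕ) := by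
      intro i
      have hi := i.isLt
      rw [hg0 i, Amat_mulVec, hF]
      simp only [hWz]
      split_ifs with h1 h2 h3 <;> first | rfl | (exfalso; omega)
    rw [Finset.sum_congr rfl fun i _ => hFi i, sum_blocks F]
    set S : ℝ := ∑ t ∈ Finset.range k, Wz t with hS
    have hb1 : ∑ t ∈ Finset.range k, F t = (t1 - 1) * (2 * σ) * S := by
      rw [hS, Finset.mul_sum]
      refine Finset.sum_congr rfl fun t ht => ?_
      rw [Finset.mem_range] at ht
      rw [hF]
      simp only [if_pos ht]
      ring
    have hb2 : ∑ t ∈ Finset.range k, F (k + t) = (-t2 - 1) * (-2 * ζ) * S := by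
      rw [hS, Finset.mul_sum]
      refine Finset.sum_congr rfl fun t ht => ?_
      rw [Finset.mem_range] at ht
      rw [hF]
      simp only [if_neg (by omega : ¬ k + t < k), if_pos (by omega : k + t < 2 * k)]
      have e : k + t - k = t := by omega
      rw [e]; ring
    have hb3 : ∑ t ∈ Finset.range k, F (2 * k + t) = (1 - t1) * (-2 * σ) * S := by
      rw [hS, Finset.mul_sum]
      refine Finset.sum_congr rfl fun t ht => ?_
      rw [Finset.mem_range] at ht
      rw [hF]
      simp only [if_neg (by omega : ¬ 2 * k + t < k),
        if_neg (by omega : ¬ 2 * k + t < 2 * k), if_pos (by omega : 2 * k + t < 3 * k)]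
      have e : 2 * k + t - 2 * k = t := by omega
      rw [e]; ring
    have hb4 : ∑ t ∈ Finset.range k, F (3 * k + t) = (t2 + 1) * (2 * ζ) * S := by
      rw [hS, Finset.mul_sum]
      refine Finset.sum_congr rfl fun t ht => ?_
      rw [Finset.mem_range] at ht
      rw [hF]
      simp only [if_neg (by omega : ¬ 3 * k + t < k),
        if_neg (by omega : ¬ 3 * k + t < 2 * k), if_neg (by omega : ¬ 3 * k + t < 3 * k)]
      have e : 3 * k + t - 3 * k = t := by omega
      rw [e]; ring
    rw [hb1, hb2, hb3, hb4]
    have hzero : (t1 - 1) * (2 * σ) + (-t2 - 1) * (-2 * ζ)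
        + (1 - t1) * (-2 * σ) + (t2 + 1) * (2 * ζ) = 0 := by
      linear_combination 4 * heq
    linear_combination S * hzero
  -- the value of fk at xstar
  have hval : fk σ ζ k (xstar c k)
      = 8 * k * Real.log 2
        + 4 * k * (Real.log (Real.cosh (σ * c)) + Real.log (Real.cosh (ζ * c))
            - (σ - ζ) * c) := by
    unfold fk
    set L1 := Real.log (2 * Real.cosh (σ * c)) with hL1
    set L2 := Real.log (2 * Real.cosh (ζ * c)) with hL2
    have hsum1 : (∑ i : Fin (4 * k),
        2 * Real.log (2 * Real.cosh ((Amat σ ζ k).mulVec (xstar c k) i / 2)))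
        = 4 * k * L1 + 4 * k * L2 := by
      set G : ℕ → ℝ := fun n =>
        if n < k then 2 * L1 else if n < 2 * k then 2 * L2
        else if n < 3 * k then 2 * L1 else 2 * L2 with hG
      have hGi : ∀ i : Fin (4 * k),
          2 * Real.log (2 * Real.cosh ((Amat σ ζ k).mulVec (xstar c k) i / 2))
            = G (i : ℕ) := by
        intro i
        rw [hu i]
        simp only [hG]
        have a1 : 2 * σ * c / 2 = σ * c := by ring
        have a2 : -(2 * ζ * c) / 2 = -(ζ * c) := by ring
        have a3 : -(2 * σ * c) / 2 = -(σ * c) := by ring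
        have a4 : 2 * ζ * c / 2 = ζ * c := by ring
        split_ifs with h1 h2 h3 <;>
          first
            | omega
            | (rw [a1, ← hL1])
            | (rw [a2, Real.cosh_neg, ← hL1])
            | (rw [a3, Real.cosh_neg, ← hL1])
            | (rw [a1, ← hL2])
            | (rw [a2, Real.cosh_neg, ← hL2])
            | (rw [a3, Real.cosh_neg, ← hL2])
            | (rw [a4, ← hL2])
      rw [Finset.sum_congr rfl fun i _ => hGi i, sum_blocks G]
      have c1 : ∑ t ∈ Finset.range k, G t = k * (2 * L1) := by
        have e : ∀ t ∈ Finset.range k, G t = 2 * L1 := by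
          intro t ht
          simp only [hG]
          rw [if_pos (Finset.mem_range.mp ht)]
        rw [Finset.sum_congr rfl e, Finset.sum_const, Finset.card_range, nsmul_eq_mul]
      have c2 : ∑ t ∈ Finset.range k, G (k + t) = k * (2 * L2) := by
        have e : ∀ t ∈ Finset.range k, G (k + t) = 2 * L2 := by
          intro t ht
          have htk := Finset.mem_range.mp ht
          simp only [hG]
          rw [if_neg (by omega), if_pos (by omega)]
        rw [Finset.sum_congr rfl e, Finset.sum_const, Finset.card_range, nsmul_eq_mul]
      have c3 : ∑ t ∈ Finset.range k, G (2 * k + t) = k * (2 * L1) := by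
        have e : ∀ t ∈ Finset.range k, G (2 * k + t) = 2 * L1 := by
          intro t ht
          have htk := Finset.mem_range.mp ht
          simp only [hG]
          rw [if_neg (by omega), if_neg (by omega), if_pos (by omega)]
        rw [Finset.sum_congr rfl e, Finset.sum_const, Finset.card_range, nsmul_eq_mul]
      have c4 : ∑ t ∈ Finset.range k, G (3 * k + t) = k * (2 * L2) := by
        have e : ∀ t ∈ Finset.range k, G (3 * k + t) = 2 * L2 := by
          intro t ht
          have htk := Finset.mem_range.mp ht
          simp only [hG]
          rw [if_neg (by omega), if_neg (by omega), if_neg (by omega)]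
        rw [Finset.sum_congr rfl e, Finset.sum_const, Finset.card_range, nsmul_eq_mul]
      rw [c1, c2, c3, c4]
      ring
    have hsum2 : (∑ i : Fin (4 * k), bvec k i * (Amat σ ζ k).mulVec (xstar c k) i)
        = 4 * k * ((σ - ζ) * c) := by
      set H : ℕ → ℝ := fun n =>
        if n < k then 2 * σ * c else if n < 2 * k then -(2 * ζ * c)
        else if n < 3 * k then 2 * σ * c else -(2 * ζ * c) with hH
      have hHi : ∀ i : Fin (4 * k),
          bvec k i * (Amat σ ζ k).mulVec (xstar c k) i = H (i : ℕ) := by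
        intro i
        rw [hu i]
        unfold bvec
        simp only [hH]
        split_ifs with h1 h2 h3 <;> first | omega | ring1
      rw [Finset.sum_congr rfl fun i _ => hHi i, sum_blocks H]
      have c1 : ∑ t ∈ Finset.range k, H t = k * (2 * σ * c) := by
        have e : ∀ t ∈ Finset.range k, H t = 2 * σ * c := by
          intro t ht
          simp only [hH]
          rw [if_pos (Finset.mem_range.mp ht)]
        rw [Finset.sum_congr rfl e, Finset.sum_const, Finset.card_range, nsmul_eq_mul]
      have c2 : ∑ t ∈ Finset.range k, H (k + t) = k * (-(2 * ζ * c)) := by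
        have e : ∀ t ∈ Finset.range k, H (k + t) = -(2 * ζ * c) := by
          intro t ht
          have htk := Finset.mem_range.mp ht
          simp only [hH]
          rw [if_neg (by omega), if_pos (by omega)]
        rw [Finset.sum_congr rfl e, Finset.sum_const, Finset.card_range, nsmul_eq_mul]
      have c3 : ∑ t ∈ Finset.range k, H (2 * k + t) = k * (2 * σ * c) := by
        have e : ∀ t ∈ Finset.range k, H (2 * k + t) = 2 * σ * c := by
          intro t ht
          have htk := Finset.mem_range.mp ht
          simp only [hH]
          rw [if_neg (by omega), if_neg (by omega), if_pos (by omega)]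
        rw [Finset.sum_congr rfl e, Finset.sum_const, Finset.card_range, nsmul_eq_mul]
      have c4 : ∑ t ∈ Finset.range k, H (3 * k + t) = k * (-(2 * ζ * c)) := by
        have e : ∀ t ∈ Finset.range k, H (3 * k + t) = -(2 * ζ * c) := by
          intro t ht
          have htk := Finset.mem_range.mp ht
          simp only [hH]
          rw [if_neg (by omega), if_neg (by omega), if_neg (by omega)]
        rw [Finset.sum_congr rfl e, Finset.sum_const, Finset.card_range, nsmul_eq_mul]
      rw [c1, c2, c3, c4]
      ring
    rw [hsum1, hsum2]
    have l1 : L1 = Real.log 2 + Real.log (Real.cosh (σ * c)) := by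
      rw [hL1]; exact Real.log_mul two_ne_zero (Real.cosh_pos _).ne'
    have l2 : L2 = Real.log 2 + Real.log (Real.cosh (ζ * c)) := by
      rw [hL2]; exact Real.log_mul two_ne_zero (Real.cosh_pos _).ne'
    rw [l1, l2]
    ring
  -- lower bound
  have hlb : ∀ y : Fin k → ℝ, fk σ ζ k (xstar c k) ≤ fk σ ζ k y := by
    intro y
    have hterm : ∀ i : Fin (4 * k),
        2 * Real.log (2 * Real.cosh ((Amat σ ζ k).mulVec (xstar c k) i / 2))
            - bvec k i * (Amat σ ζ k).mulVec (xstar c k) i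
          + (Real.tanh ((Amat σ ζ k).mulVec (xstar c k) i / 2) - bvec k i)
              * ((Amat σ ζ k).mulVec y i - (Amat σ ζ k).mulVec (xstar c k) i)
        ≤ 2 * Real.log (2 * Real.cosh ((Amat σ ζ k).mulVec y i / 2))
            - bvec k i * (Amat σ ζ k).mulVec y i :=
      fun i => phi_step _ _ _
    have hsumle := Finset.sum_le_sum fun i (_ : i ∈ Finset.univ) => hterm i
    have hy := hg y
    have hx := hg (xstar c k)
    have hexp : ∑ i : Fin (4 * k),
        (Real.tanh ((Amat σ ζ k).mulVec (xstar c k) i / 2) - bvec k i)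
          * ((Amat σ ζ k).mulVec y i - (Amat σ ζ k).mulVec (xstar c k) i) = 0 := by
      have : ∀ i : Fin (4 * k),
          (Real.tanh ((Amat σ ζ k).mulVec (xstar c k) i / 2) - bvec k i)
              * ((Amat σ ζ k).mulVec y i - (Amat σ ζ k).mulVec (xstar c k) i)
            = (Real.tanh ((Amat σ ζ k).mulVec (xstar c k) i / 2) - bvec k i)
                * (Amat σ ζ k).mulVec y i
              - (Real.tanh ((Amat σ ζ k).mulVec (xstar c k) i / 2) - bvec k i)
                  * (Amat σ ζ k).mulVec (xstar c k) i := fun i => by ring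
      rw [Finset.sum_congr rfl fun i _ => this i, Finset.sum_sub_distrib, hy, hx, sub_zero]
    unfold fk
    rw [Finset.sum_add_distrib, Finset.sum_sub_distrib] at hsumle
    rw [hexp] at hsumle
    rw [Finset.sum_sub_distrib] at hsumle
    linarith [hsumle]
  refine ⟨⟨⟨xstar c k, rfl⟩, ?_⟩, hval⟩
  rintro v ⟨y, rfl⟩
  exact hlb y
end

section
/- With f_k the binary logistic loss for the worst-case dataset (A_k, b_k) and K_{t,k} = span{e_{k-t+1},...,e_k}: for all x ∈ K_{t,k} with t ≤ k, ∇f_k(x) ∈ K_{t+1,k} (where K_{k+1,k} := ℝ^k). -/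
/-- `K_{t,k}` as a subspace of Euclidean space. -/
noncomputable def KspanE (k t : ℕ) : Submodule ℝ (EuclideanSpace ℝ (Fin k)) :=
  Submodule.span ℝ
    ((fun i : Fin k => EuclideanSpace.single i (1 : ℝ)) '' {i : Fin k | k - t ≤ (i : ℕ)})


-- ## Auxiliary lemmas
def zeroSub (k m : ℕ) : Submodule ℝ (EuclideanSpace ℝ (Fin k)) where
  carrier := {y | ∀ j : Fin k, (j : ℕ) < m → y j = 0}
  add_mem' := fun ha hb j hj => by
    simp only [PiLp.add_apply, ha j hj, hb j hj, add_zero]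
  zero_mem' := fun j hj => rfl
  smul_mem' := fun c a ha j hj => by
    simp only [PiLp.smul_apply, ha j hj, smul_eq_mul, mul_zero]

lemma mem_KspanE_iff {k t : ℕ} {x : EuclideanSpace ℝ (Fin k)} :
    x ∈ KspanE k t ↔ ∀ j : Fin k, (j : ℕ) < k - t → x j = 0 := by
  constructor
  · intro hx
    have hle : KspanE k t ≤ zeroSub k (k - t) := by
      rw [KspanE, Submodule.span_le]
      rintro _ ⟨i, hi, rfl⟩ j hj
      simp only [Set.mem_setOf_eq] at hi
      show EuclideanSpace.single i (1:ℝ) j = 0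
      rw [EuclideanSpace.single_apply, if_neg]
      intro h; subst h; omega
    exact hle hx
  · intro h
    have hxe : x = ∑ j : Fin k, x j • EuclideanSpace.single j (1 : ℝ) := by
      have := (EuclideanSpace.basisFun (Fin k) ℝ).sum_repr x
      simp only [EuclideanSpace.basisFun_repr, EuclideanSpace.basisFun_apply] at this
      exact this.symm
    rw [hxe]
    refine Submodule.sum_mem _ fun j _ => ?_
    by_cases hj : (j : ℕ) < k - t
    · rw [h j hj, zero_smul]; exact Submodule.zero_mem _
    · exact Submodule.smul_mem _ _
        (Submodule.subset_span ⟨j, Nat.le_of_not_lt hj, rfl⟩)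


def blockIdx (k : ℕ) (q : Fin 4) (r : Fin k) : Fin (4 * k) :=
  ⟨(r : ℕ) + k * (q : ℕ), by have := r.2; have := q.2; nlinarith [r.2, q.2]⟩

lemma blockIdx_val (k : ℕ) (q : Fin 4) (r : Fin k) :
    ((blockIdx k q r : Fin (4 * k)) : ℕ) = (r : ℕ) + k * (q : ℕ) := rfl

lemma q0 : ((0 : Fin 4) : ℕ) = 0 := rfl
lemma q1 : ((1 : Fin 4) : ℕ) = 1 := rfl
lemma q2 : ((2 : Fin 4) : ℕ) = 2 := rfl
lemma q3 : ((3 : Fin 4) : ℕ) = 3 := rfl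

lemma bv0 (k : ℕ) (q : Fin 4) (r : Fin k) :
    (blockIdx k q r : ℕ) = (r : ℕ) + k * (q : ℕ) := rfl

-- block value lemmas
lemma Amat_blk0 (σ ζ : ℝ) (k : ℕ) (r j : Fin k) :
    Amat σ ζ k (blockIdx k 0 r) j = 2 * σ * Wmat k r j := by
  have hr := r.2
  have hv : ((blockIdx k 0 r : Fin (4 * k)) : ℕ) = (r : ℕ) := by
    rw [blockIdx_val, q0]; omega
  simp only [Amat, Matrix.of_apply, hv]
  rw [dif_pos hr]

lemma Amat_blk1 (σ ζ : ℝ) (k : ℕ) (r j : Fin k) :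
    Amat σ ζ k (blockIdx k 1 r) j = -2 * ζ * Wmat k r j := by
  have hr := r.2
  have hv : ((blockIdx k 1 r : Fin (4 * k)) : ℕ) = (r : ℕ) + k := by
    rw [blockIdx_val, q1]; omega
  simp only [Amat, Matrix.of_apply, hv]
  rw [dif_neg (by omega), dif_pos (by omega)]
  rw [show (⟨(r : ℕ) + k - k, by omega⟩ : Fin k) = r from Fin.ext (show (r:ℕ) + k - k = (r:ℕ) by omega)]

lemma Amat_blk2 (σ ζ : ℝ) (k : ℕ) (r j : Fin k) :
    Amat σ ζ k (blockIdx k 2 r) j = -2 * σ * Wmat k r j := by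
  have hr := r.2
  have hv : ((blockIdx k 2 r : Fin (4 * k)) : ℕ) = (r : ℕ) + 2 * k := by
    rw [blockIdx_val, q2]; omega
  simp only [Amat, Matrix.of_apply, hv]
  rw [dif_neg (by omega), dif_neg (by omega), dif_pos (by omega)]
  rw [show (⟨(r : ℕ) + 2 * k - 2 * k, by omega⟩ : Fin k) = r from Fin.ext (show (r:ℕ) + 2 * k - 2 * k = (r:ℕ) by omega)]

lemma Amat_blk3 (σ ζ : ℝ) (k : ℕ) (r j : Fin k) :
    Amat σ ζ k (blockIdx k 3 r) j = 2 * ζ * Wmat k r j := by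
  have hr := r.2
  have hv : ((blockIdx k 3 r : Fin (4 * k)) : ℕ) = (r : ℕ) + 3 * k := by
    rw [blockIdx_val, q3]; omega
  simp only [Amat, Matrix.of_apply, hv]
  rw [dif_neg (by omega), dif_neg (by omega), dif_neg (by omega)]
  rw [show (⟨(r : ℕ) + 3 * k - 3 * k, by omega⟩ : Fin k) = r from Fin.ext (show (r:ℕ) + 3 * k - 3 * k = (r:ℕ) by omega)]

lemma bvec_blk0 (k : ℕ) (r : Fin k) : bvec k (blockIdx k 0 r) = 1 := by
  have hr := r.2
  have hv : ((blockIdx k 0 r : Fin (4 * k)) : ℕ) = (r : ℕ) := by rw [blockIdx_val, q0]; omega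
  simp only [bvec, hv]; rw [if_pos (by omega)]

lemma bvec_blk1 (k : ℕ) (r : Fin k) : bvec k (blockIdx k 1 r) = 1 := by
  have hr := r.2
  have hv : ((blockIdx k 1 r : Fin (4 * k)) : ℕ) = (r : ℕ) + k := by rw [blockIdx_val, q1]; omega
  simp only [bvec, hv]; rw [if_pos (by omega)]

lemma bvec_blk2 (k : ℕ) (r : Fin k) : bvec k (blockIdx k 2 r) = -1 := by
  have hr := r.2
  have hv : ((blockIdx k 2 r : Fin (4 * k)) : ℕ) = (r : ℕ) + 2 * k := by
    rw [blockIdx_val, q2]; omega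
  simp only [bvec, hv]; rw [if_neg (by omega)]

lemma bvec_blk3 (k : ℕ) (r : Fin k) : bvec k (blockIdx k 3 r) = -1 := by
  have hr := r.2
  have hv : ((blockIdx k 3 r : Fin (4 * k)) : ℕ) = (r : ℕ) + 3 * k := by
    rw [blockIdx_val, q3]; omega
  simp only [bvec, hv]; rw [if_neg (by omega)]

lemma Amat_mulVec_blk0 (σ ζ : ℝ) (k : ℕ) (x : Fin k → ℝ) (r : Fin k) :
    (Amat σ ζ k).mulVec x (blockIdx k 0 r) = 2 * σ * (Wmat k).mulVec x r := by
  simp only [Matrix.mulVec, dotProduct, Amat_blk0, Finset.mul_sum, mul_assoc]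

lemma Amat_mulVec_blk1 (σ ζ : ℝ) (k : ℕ) (x : Fin k → ℝ) (r : Fin k) :
    (Amat σ ζ k).mulVec x (blockIdx k 1 r) = -2 * ζ * (Wmat k).mulVec x r := by
  simp only [Matrix.mulVec, dotProduct, Amat_blk1, Finset.mul_sum, mul_assoc]

lemma Amat_mulVec_blk2 (σ ζ : ℝ) (k : ℕ) (x : Fin k → ℝ) (r : Fin k) :
    (Amat σ ζ k).mulVec x (blockIdx k 2 r) = -2 * σ * (Wmat k).mulVec x r := by
  simp only [Matrix.mulVec, dotProduct, Amat_blk2, Finset.mul_sum, mul_assoc]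

lemma Amat_mulVec_blk3 (σ ζ : ℝ) (k : ℕ) (x : Fin k → ℝ) (r : Fin k) :
    (Amat σ ζ k).mulVec x (blockIdx k 3 r) = 2 * ζ * (Wmat k).mulVec x r := by
  simp only [Matrix.mulVec, dotProduct, Amat_blk3, Finset.mul_sum, mul_assoc]

lemma sum_mul_W (k : ℕ) (h : Fin k → ℝ) (j : Fin k) (hj : (j : ℕ) + 2 ≤ k) :
    ∑ r : Fin k, h r * Wmat k r j
      = h ⟨k - 1 - j, by omega⟩ - h ⟨k - 2 - j, by omega⟩ := by
  have key : ∀ r : Fin k, h r * Wmat k r j =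
      (if r = (⟨k - 1 - j, by omega⟩ : Fin k) then h r else 0)
      + (if r = (⟨k - 2 - j, by omega⟩ : Fin k) then -h r else 0) := by
    intro r
    have hr := r.2
    have hjv := j.2
    simp only [Wmat, Matrix.of_apply, Fin.ext_iff]
    split_ifs <;> first | ring1 | (exfalso; omega)
  rw [Finset.sum_congr rfl fun r _ => key r, Finset.sum_add_distrib,
    Finset.sum_ite_eq', Finset.sum_ite_eq']
  simp [sub_eq_add_neg]

lemma W_mulVec_zero {k t : ℕ} {x : Fin k → ℝ}
    (hx : ∀ i : Fin k, (i : ℕ) < k - t → x i = 0) (r : Fin k) (hr : t ≤ (r : ℕ)) :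
    (Wmat k).mulVec x r = 0 := by
  rw [Matrix.mulVec, dotProduct]
  apply Finset.sum_eq_zero
  intro i _
  have hrv := r.2
  simp only [Wmat, Matrix.of_apply]
  split_ifs with h1 h2
  · rw [hx i (by omega)]; ring
  · rw [hx i (by omega)]; ring
  · ring

lemma sum_four (k : ℕ) (f : Fin (4 * k) → ℝ) :
    ∑ i, f i = ∑ q : Fin 4, ∑ r : Fin k, f (blockIdx k q r) := by
  rw [← Equiv.sum_comp finProdFinEquiv f, Fintype.sum_prod_type]
  rfl

lemma block_sum_zero {k t : ℕ} {x : Fin k → ℝ}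
    (hx : ∀ i : Fin k, (i : ℕ) < k - t → x i = 0) (c e : ℝ) (j : Fin k)
    (hj : (j : ℕ) + t + 2 ≤ k) :
    ∑ r : Fin k, (Real.tanh (c * (Wmat k).mulVec x r / 2) - e) * c * Wmat k r j = 0 := by
  have hjk : (j : ℕ) + 2 ≤ k := by omega
  have hs := sum_mul_W k (fun r => (Real.tanh (c * (Wmat k).mulVec x r / 2) - e) * c) j hjk
  rw [hs, W_mulVec_zero hx _ (show t ≤ k - 1 - (j : ℕ) by omega),
    W_mulVec_zero hx _ (show t ≤ k - 2 - (j : ℕ) by omega), sub_self]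

lemma grad_coord_zero (σ ζ : ℝ) (k t : ℕ) (x : Fin k → ℝ)
    (hx : ∀ i : Fin k, (i : ℕ) < k - t → x i = 0) (j : Fin k) (hj : (j : ℕ) < k - (t + 1)) :
    ∑ i, (Real.tanh ((Amat σ ζ k).mulVec x i / 2) - bvec k i) * Amat σ ζ k i j = 0 := by
  have hjv := j.2
  have hjt : (j : ℕ) + t + 2 ≤ k := by omega
  rw [sum_four, Fin.sum_univ_four]
  have e0 : ∀ r : Fin k,
      (Real.tanh ((Amat σ ζ k).mulVec x (blockIdx k 0 r) / 2) - bvec k (blockIdx k 0 r))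
        * Amat σ ζ k (blockIdx k 0 r) j
      = (Real.tanh ((2 * σ) * (Wmat k).mulVec x r / 2) - 1) * (2 * σ) * Wmat k r j := by
    intro r; rw [Amat_mulVec_blk0, bvec_blk0, Amat_blk0]; ring
  have e1 : ∀ r : Fin k,
      (Real.tanh ((Amat σ ζ k).mulVec x (blockIdx k 1 r) / 2) - bvec k (blockIdx k 1 r))
        * Amat σ ζ k (blockIdx k 1 r) j
      = (Real.tanh ((-2 * ζ) * (Wmat k).mulVec x r / 2) - 1) * (-2 * ζ) * Wmat k r j := by
    intro r; rw [Amat_mulVec_blk1, bvec_blk1, Amat_blk1]; ring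
  have e2 : ∀ r : Fin k,
      (Real.tanh ((Amat σ ζ k).mulVec x (blockIdx k 2 r) / 2) - bvec k (blockIdx k 2 r))
        * Amat σ ζ k (blockIdx k 2 r) j
      = (Real.tanh ((-2 * σ) * (Wmat k).mulVec x r / 2) - (-1)) * (-2 * σ) * Wmat k r j := by
    intro r; rw [Amat_mulVec_blk2, bvec_blk2, Amat_blk2]; ring
  have e3 : ∀ r : Fin k,
      (Real.tanh ((Amat σ ζ k).mulVec x (blockIdx k 3 r) / 2) - bvec k (blockIdx k 3 r))
        * Amat σ ζ k (blockIdx k 3 r) j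
      = (Real.tanh ((2 * ζ) * (Wmat k).mulVec x r / 2) - (-1)) * (2 * ζ) * Wmat k r j := by
    intro r; rw [Amat_mulVec_blk3, bvec_blk3, Amat_blk3]; ring
  rw [Finset.sum_congr rfl fun r _ => e0 r, Finset.sum_congr rfl fun r _ => e1 r,
    Finset.sum_congr rfl fun r _ => e2 r, Finset.sum_congr rfl fun r _ => e3 r,
    block_sum_zero hx (2 * σ) 1 j hjt, block_sum_zero hx (-2 * ζ) 1 j hjt,
    block_sum_zero hx (-2 * σ) (-1) j hjt, block_sum_zero hx (2 * ζ) (-1) j hjt]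
  ring

lemma hasDeriv_logistic (b : ℝ) (u : ℝ) :
    HasDerivAt (fun u : ℝ => 2 * Real.log (2 * Real.cosh (u / 2)) - b * u)
      (Real.tanh (u / 2) - b) u := by
  have h1 : HasDerivAt (fun u : ℝ => u / 2) (1 / 2) u := (hasDerivAt_id u).div_const 2
  have h2 : HasDerivAt (fun u : ℝ => Real.cosh (u / 2)) (Real.sinh (u / 2) * (1 / 2)) u :=
    h1.cosh
  have h3 : HasDerivAt (fun u : ℝ => 2 * Real.cosh (u / 2))
      (2 * (Real.sinh (u / 2) * (1 / 2))) u := h2.const_mul 2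
  have hc : (0:ℝ) < Real.cosh (u / 2) := Real.cosh_pos _
  have h4 := h3.log (by positivity)
  have h5 := (h4.const_mul 2).sub ((hasDerivAt_id u).const_mul b)
  refine h5.congr_deriv ?_
  rw [Real.tanh_eq_sinh_div_cosh]
  field_simp

noncomputable def ellmap (σ ζ : ℝ) (k : ℕ) (i : Fin (4 * k)) :
    EuclideanSpace ℝ (Fin k) →L[ℝ] ℝ :=
  LinearMap.toContinuousLinearMap
    ((LinearMap.proj i ∘ₗ Matrix.mulVecLin (Amat σ ζ k)) ∘ₗ
      (WithLp.linearEquiv 2 ℝ (Fin k → ℝ)).toLinearMap)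

lemma ellmap_apply (σ ζ : ℝ) (k : ℕ) (i : Fin (4 * k)) (y : EuclideanSpace ℝ (Fin k)) :
    ellmap σ ζ k i y = (Amat σ ζ k).mulVec y i := rfl

lemma hasGradient_fk (σ ζ : ℝ) (k : ℕ) (x : EuclideanSpace ℝ (Fin k)) :
    HasGradientAt (fun y : EuclideanSpace ℝ (Fin k) => fk σ ζ k y)
      (WithLp.toLp 2 (fun j => ∑ i, (Real.tanh ((Amat σ ζ k).mulVec x i / 2) - bvec k i) * Amat σ ζ k i j :
        Fin k → ℝ) : EuclideanSpace ℝ (Fin k)) x := by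
  set d : Fin (4 * k) → ℝ :=
    fun i => Real.tanh ((Amat σ ζ k).mulVec x i / 2) - bvec k i with hd
  have hterm : ∀ i : Fin (4 * k), HasFDerivAt
      (fun y : EuclideanSpace ℝ (Fin k) =>
        2 * Real.log (2 * Real.cosh ((Amat σ ζ k).mulVec y i / 2))
          - bvec k i * (Amat σ ζ k).mulVec y i)
      (d i • ellmap σ ζ k i) x := by
    intro i
    have h1 := hasDeriv_logistic (bvec k i) (ellmap σ ζ k i x)
    have h2 := (ellmap σ ζ k i).hasFDerivAt (x := x)
    have h3 := h1.comp_hasFDerivAt x h2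
    simp only [Function.comp_def, ellmap_apply] at h3 ⊢
    exact h3
  have hsum := HasFDerivAt.fun_sum (fun i (_ : i ∈ Finset.univ) => hterm i)
  have hfk : (fun y : EuclideanSpace ℝ (Fin k) => fk σ ζ k y)
      = fun y : EuclideanSpace ℝ (Fin k) => ∑ i,
          (2 * Real.log (2 * Real.cosh ((Amat σ ζ k).mulVec y i / 2))
            - bvec k i * (Amat σ ζ k).mulVec y i) := by
    funext y; rw [fk, Finset.sum_sub_distrib]
  rw [hasGradientAt_iff_hasFDerivAt]
  have hdual : (InnerProductSpace.toDual ℝ (EuclideanSpace ℝ (Fin k)))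
      (WithLp.toLp 2 (fun j => ∑ i, d i * Amat σ ζ k i j : Fin k → ℝ) : EuclideanSpace ℝ (Fin k))
      = ∑ i, d i • ellmap σ ζ k i := by
    apply ContinuousLinearMap.ext
    intro v
    rw [InnerProductSpace.toDual_apply_apply]
    simp only [PiLp.inner_apply, RCLike.inner_apply, conj_trivial, PiLp.toLp_apply,
      ContinuousLinearMap.sum_apply, ContinuousLinearMap.smul_apply, ellmap_apply, smul_eq_mul]
    simp only [Matrix.mulVec, dotProduct, Finset.sum_mul, Finset.mul_sum]
    rw [Finset.sum_comm]
    exact Finset.sum_congr rfl fun i _ => Finset.sum_congr rfl fun j _ => by ring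
  rw [hfk, hdual]
  exact hsum


theorem gradient_fk_mem_Kspan_succ (σ ζ : ℝ) (hζ : 0 < ζ) (hζσ : ζ < σ) (k t : ℕ)
    (htk : t ≤ k) (x : EuclideanSpace ℝ (Fin k)) (hx : x ∈ KspanE k t) :
    gradient (fun y : EuclideanSpace ℝ (Fin k) => fk σ ζ k y) x ∈ KspanE k (t + 1) := by
  have hx0 : ∀ i : Fin k, (i : ℕ) < k - t → x i = 0 := mem_KspanE_iff.mp hx
  have hg := hasGradient_fk σ ζ k x
  rw [hg.gradient, mem_KspanE_iff]
  intro j hj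
  exact grad_coord_zero σ ζ k t x hx0 j hj
end
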